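/- If j, k ≥ 2 and j divides k, then there is a continuous injection φ : 2^ℕ → 2^ℕ that is simultaneously a reduction of E₀ to E₀ and of F₀(j) to F₀(k); explicitly φ(c) = the concatenation over n of the constant block of c(n) repeated k/j times works. -/

import Mathlib

/-- Eventual equality on Cantor space. -/
def E0 (c d : ℕ → Bool) : Prop := ∃ n : ℕ, ∀ m ≥ n, c m = d m

open Finset in
/-- The index-`k` subrelation `F₀(k)` of `E₀`: eventual agreement of partial
sums modulo `k`. -/
def F0 (k : ℕ) (c d : ℕ → Bool) : Prop :=
  ∃ n : ℕ, ∀ m ≥ n,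
    (∑ i ∈ range m, (c i).toNat) % k = (∑ i ∈ range m, (d i).toNat) % k

open Finset in
lemma blocksum_aux (r : ℕ) (f : ℕ → ℕ) (q s : ℕ) (hs : s ≤ r) :
    ∑ i ∈ Ico (q * r) (q * r + s), f (i / r) = s * f q := by
  have : ∀ i ∈ Ico (q * r) (q * r + s), f (i / r) = f q := by
    intro i hi
    simp only [mem_Ico] at hi
    have : i / r = q := Nat.div_eq_of_lt_le hi.1 (by
      have : q * r + s ≤ (q + 1) * r := by nlinarith
      omega)
    rw [this]
  rw [Finset.sum_congr rfl this, Finset.sum_const, Nat.card_Ico, Nat.add_sub_cancel_left,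
    smul_eq_mul]

open Finset in
lemma blocksum (r : ℕ) (f : ℕ → ℕ) (q s : ℕ) (hs : s ≤ r) :
    ∑ i ∈ range (q * r + s), f (i / r) = r * (∑ i ∈ range q, f i) + s * f q := by
  induction q generalizing s with
  | zero =>
    simpa using blocksum_aux r f 0 s hs
  | succ q ih =>
    have h1 : (q + 1) * r + s = q * r + r + s := by ring
    rw [h1, range_eq_Ico, ← Finset.sum_Ico_consecutive _ (Nat.zero_le (q * r + r))
      (by omega : q * r + r ≤ q * r + r + s)]
    have h2 : ∑ i ∈ Ico 0 (q * r + r), f (i / r) = r * (∑ i ∈ range q, f i) + r * f q := by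
      rw [← range_eq_Ico, ih r le_rfl]
    have h3 : ∑ i ∈ Ico (q * r + r) (q * r + r + s), f (i / r) = s * f (q + 1) := by
      have := blocksum_aux r f (q + 1) s hs
      rwa [(by ring : (q + 1) * r = q * r + r)] at this
    rw [h2, h3, Finset.sum_range_succ]
    ring

/-- If `j ∣ k` then stretching each bit into a constant block of length `k / j`
gives a continuous injection that embeds `(E₀, F₀(j))` into `(E₀, F₀(k))`. -/
theorem embedding_f0_of_dvd (j k : ℕ) (hj : 2 ≤ j) (hk : 2 ≤ k) (hjk : j ∣ k) :
    ∃ φ : (ℕ → Bool) → (ℕ → Bool),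
      (φ = fun c m => c (m / (k / j))) ∧
      Continuous φ ∧ Function.Injective φ ∧
      (∀ c d, E0 c d ↔ E0 (φ c) (φ d)) ∧
      (∀ c d, F0 j c d ↔ F0 k (φ c) (φ d)) := by
  set r := k / j with hr_def
  have hr : 0 < r := Nat.div_pos (Nat.le_of_dvd (by omega) hjk) (by omega)
  have hkr : k = j * r := (Nat.mul_div_cancel' hjk).symm
  refine ⟨fun c m => c (m / r), rfl, ?_, ?_, ?_, ?_⟩
  · exact continuous_pi fun m => continuous_apply _
  · intro c d h
    funext m
    have := congrFun h (m * r)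
    simpa [Nat.mul_div_cancel m hr] using this
  · intro c d
    constructor
    · rintro ⟨n, hn⟩
      exact ⟨n * r, fun m hm => hn (m / r) ((Nat.le_div_iff_mul_le hr).2 hm)⟩
    · rintro ⟨n, hn⟩
      refine ⟨n, fun m hm => ?_⟩
      have := hn (m * r) (le_trans hm (Nat.le_mul_of_pos_right m hr))
      simpa [Nat.mul_div_cancel m hr] using this
  · intro c d
    constructor
    · rintro ⟨n, hn⟩
      -- pointwise equality beyond n
      have hpt : ∀ q ≥ n, c q = d q := by
        intro q hq
        have h1 := hn q hq
        have h2 := hn (q + 1) (by omega)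
        rw [Finset.sum_range_succ, Finset.sum_range_succ] at h2
        have := Nat.ModEq.add_left_cancel (a := ∑ i ∈ Finset.range q, (c i).toNat)
          (b := ∑ i ∈ Finset.range q, (d i).toNat) h1 h2
        have hcle : (c q).toNat ≤ 1 := by cases c q <;> simp
        have hdle : (d q).toNat ≤ 1 := by cases d q <;> simp
        have hcq : (c q).toNat < j := by omega
        have hdq : (d q).toNat < j := by omega
        have : (c q).toNat = (d q).toNat := by
          have := this
          unfold Nat.ModEq at this
          rwa [Nat.mod_eq_of_lt hcq, Nat.mod_eq_of_lt hdq] at this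
        cases hc : c q <;> cases hd : d q
        · rfl
        · rw [hc, hd] at this; exact absurd this (by decide)
        · rw [hc, hd] at this; exact absurd this (by decide)
        · rfl
      refine ⟨n * r, fun m hm => ?_⟩
      have hq : n ≤ m / r := (Nat.le_div_iff_mul_le hr).2 hm
      have hm' : m = (m / r) * r + m % r := by
        rw [Nat.div_add_mod' m r]
      set q := m / r
      set s := m % r
      have hs : s ≤ r := le_of_lt (Nat.mod_lt m hr)
      show (∑ i ∈ Finset.range m, (c (i / r)).toNat) % k
          = (∑ i ∈ Finset.range m, (d (i / r)).toNat) % k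
      rw [hm', blocksum r (fun i => (c i).toNat) q s hs, blocksum r (fun i => (d i).toNat) q s hs]
      rw [hkr]
      have hsum : (∑ i ∈ Finset.range q, (c i).toNat) ≡ (∑ i ∈ Finset.range q, (d i).toNat) [MOD j] := hn q hq
      have h5 : r * (∑ i ∈ Finset.range q, (c i).toNat) ≡ r * (∑ i ∈ Finset.range q, (d i).toNat) [MOD r * j] := hsum.mul_left' r
      rw [mul_comm r j] at h5
      rw [hpt q hq]
      exact h5.add_right (s * (d q).toNat)
    · rintro ⟨n, hn⟩
      refine ⟨n, fun q hq => ?_⟩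
      have hqr : n ≤ q * r := le_trans hq (Nat.le_mul_of_pos_right q hr)
      have this : (∑ i ∈ Finset.range (q * r), (c (i / r)).toNat) % k
          = (∑ i ∈ Finset.range (q * r), (d (i / r)).toNat) % k := hn (q * r) hqr
      have h0 : (q * r : ℕ) = q * r + 0 := by omega
      rw [h0, blocksum r (fun i => (c i).toNat) q 0 (by omega),
        blocksum r (fun i => (d i).toNat) q 0 (by omega)] at this
      simp only [Nat.zero_mul, Nat.add_zero] at this
      rw [hkr, mul_comm j r] at this
      exact Nat.ModEq.mul_left_cancel' (by omega) this
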